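/- arXiv:1704.06091 — 4 statements merged into one kernel-verified Lean document; each statement's English description precedes it below -/
import Mathlib

section
/- For K > 0 and N < −1, the function u(x) = sinh(√(K/(1−N))·x) satisfies u''(x) − ψ'(x)u'(x) = −(KN/(N−1))·u(x) for all x ∈ ℝ, where ψ(x) = (1−N)·log(cosh(√(K/(1−N))·x)). -/
theorem stmt_6 (K N : ℝ) (hK : 0 < K) (hN : N < -1)
    (u ψ : ℝ → ℝ)
    (hu : u = fun x => Real.sinh (Real.sqrt (K / (1 - N)) * x))
    (hψ : ψ = fun x => (1 - N) * Real.log (Real.cosh (Real.sqrt (K / (1 - N)) * x))) :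
    ∀ x : ℝ, deriv (deriv u) x - deriv ψ x * deriv u x = -(K * N / (N - 1)) * u x := by
  have h1N : (0:ℝ) < 1 - N := by linarith
  subst hu hψ
  intro x
  set a := Real.sqrt (K / (1 - N)) with ha
  have ha2 : a * a = K / (1 - N) := Real.mul_self_sqrt (le_of_lt (div_pos hK h1N))
  have hid : ∀ y : ℝ, HasDerivAt (fun x : ℝ => a * x) a y := fun y => by
    simpa using (hasDerivAt_id y).const_mul a
  have hu' : deriv (fun x => Real.sinh (a * x)) = fun x => a * Real.cosh (a * x) := by
    funext y
    rw [(hid y).sinh.deriv]; ring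
  rw [hu']
  have hu'' : deriv (fun x => a * Real.cosh (a * x)) x = a * a * Real.sinh (a * x) := by
    rw [((hid x).cosh.const_mul a).deriv]; ring
  have hψ' : deriv (fun x => (1 - N) * Real.log (Real.cosh (a * x))) x
      = (1 - N) * (Real.sinh (a * x) * a / Real.cosh (a * x)) := by
    rw [(((hid x).cosh.log (Real.cosh_pos (x := a * x)).ne').const_mul (1 - N)).deriv]
  rw [hu'', hψ']
  have hc : Real.cosh (a * x) ≠ 0 := (Real.cosh_pos (x := a * x)).ne'
  have h1N' : (1:ℝ) - N ≠ 0 := by linarith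
  have hN1 : N - 1 ≠ 0 := by linarith
  have key : a ^ 2 * (1 - N) = K := by rw [sq, ha2]; field_simp
  field_simp [hN1]
  linear_combination (-(N * Real.sinh (a * x))) * key
end

section
/- For K > 0 and N ∈ [−1, 0), the function u(x) = sinh(√(K/(1−N))·x) is NOT square-integrable with respect to the measure cosh(√(K/(1−N))·x)^{N−1}dx on ℝ. -/
open MeasureTheory Real

lemma tanh_mono_aux {a b : ℝ} (hab : a ≤ b) :
    Real.sinh a / Real.cosh a ≤ Real.sinh b / Real.cosh b := by
  rw [div_le_div_iff₀ (Real.cosh_pos a) (Real.cosh_pos b)]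
  have h : 0 ≤ Real.sinh (b - a) := Real.sinh_nonneg_iff.mpr (by linarith)
  rw [Real.sinh_sub] at h
  nlinarith

theorem stmt_8 (K N : ℝ) (hK : 0 < K) (hN1 : -1 ≤ N) (hN0 : N < 0) :
    ¬ MeasureTheory.Integrable
      (fun x : ℝ => (Real.sinh (Real.sqrt (K / (1 - N)) * x)) ^ 2 *
        Real.cosh (Real.sqrt (K / (1 - N)) * x) ^ (N - 1)) := by
  intro h
  set a := Real.sqrt (K / (1 - N)) with ha
  have haN : (0:ℝ) < 1 - N := by linarith
  have ha0 : 0 < a := Real.sqrt_pos.mpr (div_pos hK haN)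
  set c := (Real.sinh a / Real.cosh a) ^ 2 with hc
  have hc0 : 0 < c :=
    pow_pos (div_pos (Real.sinh_pos_iff.mpr ha0) (Real.cosh_pos a)) 2
  -- lower bound on Ici 1
  have hbound : ∀ x ∈ Set.Ici (1:ℝ), c ≤
      Real.sinh (a * x) ^ 2 * Real.cosh (a * x) ^ (N - 1) := by
    intro x hx
    have hx1 : (1:ℝ) ≤ x := hx
    have hax : a ≤ a * x := le_mul_of_one_le_right ha0.le hx1
    have hcosh : (0:ℝ) < Real.cosh (a * x) := Real.cosh_pos _
    have step1 : c ≤ (Real.sinh (a * x) / Real.cosh (a * x)) ^ 2 := by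
      apply pow_le_pow_left₀ (div_nonneg (Real.sinh_nonneg_iff.mpr ha0.le) (Real.cosh_pos a).le)
      exact tanh_mono_aux hax
    have step2 : (Real.sinh (a * x) / Real.cosh (a * x)) ^ 2
        = Real.sinh (a * x) ^ 2 * Real.cosh (a * x) ^ (-2 : ℝ) := by
      rw [div_pow, Real.rpow_neg hcosh.le, show ((2:ℝ)) = ((2:ℕ):ℝ) by norm_num,
        Real.rpow_natCast]
      ring
    have step3 : Real.cosh (a * x) ^ (-2 : ℝ) ≤ Real.cosh (a * x) ^ (N - 1) :=
      Real.rpow_le_rpow_of_exponent_le (Real.one_le_cosh _) (by linarith)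
    calc c ≤ Real.sinh (a * x) ^ 2 * Real.cosh (a * x) ^ (-2 : ℝ) := by
            rw [← step2]; exact step1
      _ ≤ Real.sinh (a * x) ^ 2 * Real.cosh (a * x) ^ (N - 1) :=
            mul_le_mul_of_nonneg_left step3 (sq_nonneg _)
  have hres : IntegrableOn
      (fun x : ℝ => Real.sinh (a * x) ^ 2 * Real.cosh (a * x) ^ (N - 1))
      (Set.Ici 1) volume := h.integrableOn
  have hconst : IntegrableOn (fun _ : ℝ => c) (Set.Ici 1) volume := by
    apply hres.mono' aestronglyMeasurable_const
    rw [ae_restrict_iff' measurableSet_Ici]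
    filter_upwards with x hx
    rw [Real.norm_eq_abs, abs_of_pos hc0]
    exact hbound x hx
  rw [IntegrableOn, integrable_const_iff] at hconst
  rcases hconst with h1 | h2
  · exact hc0.ne' h1
  · simp [isFiniteMeasure_iff, Measure.restrict_apply_univ, Real.volume_Ici] at h2
end

section
/- Let K > 0 and N < −1, and let u : ℝ → ℝ be a nonconstant smooth function with u(0) = 0 satisfying u''(t) − ψ'(t)u'(t) = −(KN/(N−1))u(t) and u''(t) = (K/(1−N))u(t) for all t (the 1-dimensional Hessian equation). Then ψ'(t) = √(K(1−N))·tanh(√(K/(1−N))·t) for all t, and hence ψ(t) = (1−N)log(cosh(√(K/(1−N))t)) + ψ(0). -/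
theorem stmt_11 (K N : ℝ) (hK : 0 < K) (hN : N < -1)
    (u ψ : ℝ → ℝ) (hu : ContDiff ℝ 2 u) (hψ : ContDiff ℝ 1 ψ)
    (hu0 : u 0 = 0) (hu'0 : deriv u 0 ≠ 0)
    (hode1 : ∀ t : ℝ, deriv (deriv u) t - deriv ψ t * deriv u t = -(K * N / (N - 1)) * u t)
    (hode2 : ∀ t : ℝ, deriv (deriv u) t = (K / (1 - N)) * u t) :
    (∀ t : ℝ, deriv ψ t = Real.sqrt (K * (1 - N)) * Real.tanh (Real.sqrt (K / (1 - N)) * t)) ∧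
    (∀ t : ℝ, ψ t =
      (1 - N) * Real.log (Real.cosh (Real.sqrt (K / (1 - N)) * t)) + ψ 0) := by
  have h1N : (0:ℝ) < 1 - N := by linarith
  have hN1 : N - 1 ≠ 0 := by linarith
  set a := Real.sqrt (K / (1 - N)) with ha_def
  have ha2 : a ^ 2 = K / (1 - N) := Real.sq_sqrt (by positivity)
  have ha : 0 < a := Real.sqrt_pos.mpr (by positivity)
  have hdu : Differentiable ℝ u := hu.differentiable (by norm_num)
  have hddu : Differentiable ℝ (deriv u) := by
    have : ContDiff ℝ ((1:ℕ∞)+1) u := by exact_mod_cast hu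
    exact ((contDiff_succ_iff_deriv.mp this).2.2).differentiable (by norm_num)
  have hode2' : ∀ t, deriv (deriv u) t = a ^ 2 * u t := by
    intro t; rw [hode2 t, ha2]
  -- the key ODE invariants
  have hlin : ∀ t, HasDerivAt (fun s => a * s) a t := by
    intro t
    simpa using (hasDerivAt_id t).const_mul a
  have hsinh : ∀ t, HasDerivAt (fun s => Real.sinh (a * s)) (Real.cosh (a * t) * a) t := by
    intro t
    exact (Real.hasDerivAt_sinh (a * t)).comp t (hlin t)
  have hcosh : ∀ t, HasDerivAt (fun s => Real.cosh (a * s)) (Real.sinh (a * t) * a) t := by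
    intro t
    exact (Real.hasDerivAt_cosh (a * t)).comp t (hlin t)
  have hF : ∀ t, deriv u t * Real.sinh (a * t) - a * u t * Real.cosh (a * t) = 0 := by
    have key : ∀ t, HasDerivAt
        (fun s => deriv u s * Real.sinh (a * s) - a * u s * Real.cosh (a * s)) 0 t := by
      intro t
      have h1 : HasDerivAt u (deriv u t) t := (hdu t).hasDerivAt
      have h2 : HasDerivAt (deriv u) (a ^ 2 * u t) t := by
        rw [← hode2' t]; exact (hddu t).hasDerivAt
      have := ((h2.mul (hsinh t)).sub (((h1.const_mul a)).mul (hcosh t)))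
      refine this.congr_deriv ?_
      ring
    have hconst := is_const_of_deriv_eq_zero (fun t => (key t).differentiableAt)
      (fun t => (key t).deriv)
    intro t
    have := hconst t 0
    simpa [hu0] using this
  have hE : ∀ t, (deriv u t) ^ 2 - a ^ 2 * (u t) ^ 2 = (deriv u 0) ^ 2 := by
    have key : ∀ t, HasDerivAt
        (fun s => (deriv u s) ^ 2 - a ^ 2 * (u s) ^ 2) 0 t := by
      intro t
      have h1 : HasDerivAt u (deriv u t) t := (hdu t).hasDerivAt
      have h2 : HasDerivAt (deriv u) (a ^ 2 * u t) t := by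
        rw [← hode2' t]; exact (hddu t).hasDerivAt
      have := (h2.pow 2).sub ((h1.pow 2).const_mul (a ^ 2))
      refine this.congr_deriv ?_
      simp only [show (2:ℕ) - 1 = 1 from rfl]
      ring
    have hconst := is_const_of_deriv_eq_zero (fun t => (key t).differentiableAt)
      (fun t => (key t).deriv)
    intro t
    have := hconst t 0
    simpa [hu0] using this
  have hune : ∀ t, deriv u t ≠ 0 := by
    intro t h
    have := hE t
    rw [h] at this
    nlinarith [sq_nonneg (u t), sq_nonneg (deriv u 0), pow_pos (abs_pos.mpr hu'0) 2,
      sq_abs (deriv u 0)]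
  have hψu : ∀ t, deriv ψ t * deriv u t = K * u t := by
    intro t
    have h1 := hode1 t
    have h2 := hode2 t
    have key : deriv ψ t * deriv u t = (K / (1 - N)) * u t + (K * N / (N - 1)) * u t := by
      linarith
    rw [key]
    field_simp
    ring
  have hKa : Real.sqrt (K * (1 - N)) = (1 - N) * a := by
    rw [show K * (1 - N) = (1 - N) ^ 2 * (K / (1 - N)) by field_simp,
      Real.sqrt_mul (by positivity), Real.sqrt_sq h1N.le, ha_def]
  have hKeq : K = a ^ 2 * (1 - N) := by
    rw [ha2]; field_simp
  have part1 : ∀ t : ℝ, deriv ψ t = Real.sqrt (K * (1 - N)) * Real.tanh (a * t) := by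
    intro t
    have hc : Real.cosh (a * t) ≠ 0 := (Real.cosh_pos (x := a * t)).ne'
    rw [hKa, Real.tanh_eq_sinh_div_cosh]
    have hcancel : deriv ψ t * (deriv u t * Real.cosh (a * t)) =
        ((1 - N) * a * (Real.sinh (a * t) / Real.cosh (a * t))) *
          (deriv u t * Real.cosh (a * t)) := by
      rw [div_eq_mul_inv]
      linear_combination Real.cosh (a * t) * hψu t + u t * Real.cosh (a * t) * hKeq -
        (1 - N) * a * hF t - (1 - N) * a * Real.sinh (a * t) * deriv u t * mul_inv_cancel₀ hc
    exact mul_right_cancel₀ (mul_ne_zero (hune t) hc) hcancel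
  constructor
  · exact part1
  · -- second part
    have hdψ : Differentiable ℝ ψ := hψ.differentiable (by norm_num)
    have key : ∀ t, HasDerivAt
        (fun s => ψ s - (1 - N) * Real.log (Real.cosh (a * s))) 0 t := by
      intro t
      have hc : Real.cosh (a * t) ≠ 0 := (Real.cosh_pos (x := a * t)).ne'
      have h1 : HasDerivAt ψ (deriv ψ t) t := (hdψ t).hasDerivAt
      have h2 : HasDerivAt (fun s => Real.log (Real.cosh (a * s)))
          ((Real.sinh (a * t) * a) / Real.cosh (a * t)) t := (hcosh t).log hc
      have := h1.sub (h2.const_mul (1 - N))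
      refine this.congr_deriv ?_
      rw [part1 t, hKa, Real.tanh_eq_sinh_div_cosh]
      field_simp
      ring
    have hconst := is_const_of_deriv_eq_zero (fun t => (key t).differentiableAt)
      (fun t => (key t).deriv)
    intro t
    have := hconst t 0
    simp only [mul_zero, Real.cosh_zero, Real.log_one] at this
    linarith
end

section
/- On the upper half-plane with hyperbolic metric g = (dx²+dy²)/y² and weight ψ(x,y) = −(2−N)log y for N < 0, the weighted Ricci tensor Ric_N = Ric_g + Hess ψ − (dψ⊗dψ)/(2−N) equals (1−N)·g; explicitly, the matrix −y^{-2}Id + Hess ψ + (dψ⊗dψ)/(2−N) equals ((1−N)/y²)·Id at every point (x,y). -/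
theorem stmt_17 (N x y : ℝ) (hN : N < 0) (hy : 0 < y)
    (ψ : ℝ → ℝ → ℝ) (hψ : ψ = fun _ b => -(2 - N) * Real.log b)
    (ψx ψy ψxx ψxy ψyy : ℝ)
    (hψx : ψx = deriv (fun a => ψ a y) x)
    (hψy : ψy = deriv (fun b => ψ x b) y)
    (hψxx : ψxx = deriv (fun a => deriv (fun a' => ψ a' y) a) x)
    (hψxy : ψxy = deriv (fun b => deriv (fun a => ψ a b) x) y)
    (hψyy : ψyy = deriv (fun b => deriv (fun b' => ψ x b') b) y) :
    -(1 / y ^ 2) + (ψxx - (1 / y) * ψy) + ψx * ψx / (2 - N) = (1 - N) / y ^ 2 ∧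
    (ψxy - (-(1 / y)) * ψx) + ψx * ψy / (2 - N) = 0 ∧
    -(1 / y ^ 2) + (ψyy - (-(1 / y)) * ψy) + ψy * ψy / (2 - N) = (1 - N) / y ^ 2 := by
  subst hψ
  simp only [deriv_const, deriv_const', deriv_const_mul_field', Real.deriv_log, deriv_inv] at *
  subst hψx hψy hψxx hψxy hψyy
  have h2N : (2 : ℝ) - N ≠ 0 := by linarith
  refine ⟨?_, ?_, ?_⟩ <;> field_simp <;> ring
end
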